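/- arXiv:2210.08599 — 2 statements merged into one kernel-verified Lean document; each statement's English description precedes it below -/
import Mathlib

section
/- Let L ≥ 1, α ∈ (0,1), and Δ = (α^{1/2} − α)/L. Suppose ξ = {ξ_t}_{t=0}^T is a stochastic process with finite support, Φ is a square matrix that is (L,α)-stable (i.e. ‖Φ^t‖ ≤ Lα^t for all t ≥ 0), and the square random matrices Φ_t(ξ_{0:t}) satisfy ‖Φ − Φ_t(ξ_{0:t})‖ ≤ Δ almost surely for all t ∈ {1,…,T}. Then {Φ_t(ξ_{0:t})}_{t=1}^T is (L, α^{1/2})-stable: ‖∏_{t=t'+1}^{t''} Φ_t(ξ_{0:t})‖ ≤ L α^{(t''−t')/2} almost surely for all 0 ≤ t' < t'' ≤ T. -/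
open Matrix BigOperators

/-- Operator 2-norm of a real matrix, i.e. the norm of the induced linear map between
Euclidean spaces. -/
noncomputable def opNorm {m n : Type*} [Fintype m] [Fintype n] [DecidableEq n]
    (A : Matrix m n ℝ) : ℝ :=
  ‖LinearMap.toContinuousLinearMap (Matrix.toEuclideanLin A)‖

/-- `mprod Φ a k = Φ (a+k-1) * ⋯ * Φ (a+1) * Φ a`: the ordered product of `k` factors
starting at index `a` (larger indices on the left). -/
def mprod {n : ℕ} (Φ : ℕ → Matrix (Fin n) (Fin n) ℝ) (a : ℕ) : ℕ → Matrix (Fin n) (Fin n) ℝ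
  | 0 => 1
  | k + 1 => Φ (a + k) * mprod Φ a k

/-- Squared Euclidean norm of a vector. -/
noncomputable def sqnorm {m : Type*} [Fintype m] (v : m → ℝ) : ℝ := ∑ i, v i ^ 2

/-- A discrete-time stochastic process with finitely many scenarios, each of positive
probability (so “almost surely” means “for every scenario”).  `ξ t s` is the value of the
process at time `t` in scenario `s`. -/
structure FiniteProcess (Ξ : Type) where
  S : Type
  [finS : Fintype S]
  P : S → ℝ
  P_pos : ∀ s, 0 < P s
  P_sum : ∑ s, P s = 1
  ξ : ℕ → S → Ξ

attribute [instance] FiniteProcess.finS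

namespace FiniteProcess

variable {Ξ : Type} (proc : FiniteProcess Ξ)

/-- Two scenarios have the same past `ξ₀,…,ξ_t`. -/
def PrefixEq (t : ℕ) (s s' : proc.S) : Prop := ∀ τ ≤ t, proc.ξ τ s = proc.ξ τ s'

/-- `f` depends only on `ξ₀,…,ξ_t` (nonanticipativity). -/
def Adapted (t : ℕ) {β : Type*} (f : proc.S → β) : Prop :=
  ∀ s s', proc.PrefixEq t s s' → f s = f s'

open Classical in
/-- Conditional expectation of `f` given `ξ₀,…,ξ_t` equal to the prefix of scenario `sb`. -/
noncomputable def cexp (t : ℕ) (sb : proc.S) (f : proc.S → ℝ) : ℝ :=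
  (∑ s, if proc.PrefixEq t s sb then proc.P s * f s else 0) /
    (∑ s, if proc.PrefixEq t s sb then proc.P s else 0)

open Classical in
/-- Probability of an event. -/
noncomputable def prob (E : proc.S → Prop) : ℝ := ∑ s, if E s then proc.P s else 0

end FiniteProcess

section Aux

variable {N : ℕ}

lemma opNorm_eq_clm (A : Matrix (Fin N) (Fin N) ℝ) :
    opNorm A = ‖Matrix.toEuclideanCLM (𝕜 := ℝ) A‖ := by congr 1; infer_instance

lemma opNorm_nonneg (A : Matrix (Fin N) (Fin N) ℝ) : 0 ≤ opNorm A := by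
  rw [opNorm_eq_clm]; exact norm_nonneg _

lemma opNorm_sub_rev (A B : Matrix (Fin N) (Fin N) ℝ) :
    opNorm (A - B) = opNorm (B - A) := by
  rw [opNorm_eq_clm, opNorm_eq_clm, map_sub, map_sub, norm_sub_rev]

/-- Expansion of the product around the deterministic matrix. -/
lemma mprod_expand (Φd : Matrix (Fin N) (Fin N) ℝ)
    (Ψ : ℕ → Matrix (Fin N) (Fin N) ℝ) (a : ℕ) (k : ℕ) :
    mprod Ψ a k = Φd ^ k +
      ∑ j ∈ Finset.range k, Φd ^ (k - 1 - j) * ((Ψ (a + j) - Φd) * mprod Ψ a j) := by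
  induction k with
  | zero => simp [mprod]
  | succ k ih =>
      have hsplit : Ψ (a + k) = Φd + (Ψ (a + k) - Φd) := by abel
      rw [mprod, hsplit, add_mul, ih, Finset.sum_range_succ]
      have hlast : (k + 1 - 1 - k : ℕ) = 0 := by omega
      rw [hlast, pow_zero, one_mul, mul_add, Finset.mul_sum]
      have hsum : ∀ j ∈ Finset.range k,
          Φd * (Φd ^ (k - 1 - j) * ((Ψ (a + j) - Φd) * mprod Ψ a j)) =
          Φd ^ (k + 1 - 1 - j) * ((Ψ (a + j) - Φd) * mprod Ψ a j) := by
        intro j hj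
        rw [Finset.mem_range] at hj
        have : (k + 1 - 1 - j : ℕ) = (k - 1 - j) + 1 := by omega
        rw [this, pow_succ', mul_assoc]
      rw [Finset.sum_congr rfl hsum, ← pow_succ', ← ih]
      abel

lemma arith_sum (L r : ℝ) (k : ℕ) :
    L * (r ^ 2) ^ k +
      ∑ j ∈ Finset.range k, L * (r ^ 2) ^ (k - 1 - j) * ((r - r ^ 2) * r ^ j)
      = L * r ^ k := by
  induction k with
  | zero => simp
  | succ k ih =>
      rw [Finset.sum_range_succ]
      have hsum : ∀ j ∈ Finset.range k,
          L * (r ^ 2) ^ (k + 1 - 1 - j) * ((r - r ^ 2) * r ^ j) =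
          r ^ 2 * (L * (r ^ 2) ^ (k - 1 - j) * ((r - r ^ 2) * r ^ j)) := by
        intro j hj
        rw [Finset.mem_range] at hj
        have : (k + 1 - 1 - j : ℕ) = (k - 1 - j) + 1 := by omega
        rw [this, pow_succ]
        ring
      rw [Finset.sum_congr rfl hsum, ← Finset.mul_sum]
      have hlast : (k + 1 - 1 - k : ℕ) = 0 := by omega
      rw [hlast]
      have h2 : r ^ 2 * (∑ j ∈ Finset.range k,
          L * (r ^ 2) ^ (k - 1 - j) * ((r - r ^ 2) * r ^ j)) =
          r ^ 2 * (L * r ^ k) - r ^ 2 * (L * (r ^ 2) ^ k) := by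
        rw [← ih]; ring
      rw [h2]
      ring

lemma key_bound (L α : ℝ) (hL : 1 ≤ L) (hα0 : 0 < α) (hα1 : α < 1)
    (Φd : Matrix (Fin N) (Fin N) ℝ) (Ψ : ℕ → Matrix (Fin N) (Fin N) ℝ)
    (hstable : ∀ t : ℕ, opNorm (Φd ^ t) ≤ L * α ^ t)
    (a K : ℕ)
    (hclose : ∀ j < K, opNorm (Ψ (a + j) - Φd) ≤ (Real.sqrt α - α) / L) :
    ∀ k ≤ K, opNorm (mprod Ψ a k) ≤ L * Real.sqrt α ^ k := by
  set r := Real.sqrt α with hr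
  have hL0 : (0:ℝ) < L := lt_of_lt_of_le one_pos hL
  have hr0 : 0 ≤ r := Real.sqrt_nonneg α
  have hαr : α = r ^ 2 := (Real.sq_sqrt hα0.le).symm
  have hαler : α ≤ r := by
    have h := Real.sqrt_le_sqrt (show α ^ 2 ≤ α by nlinarith)
    rwa [Real.sqrt_sq hα0.le] at h
  have hΔ0 : 0 ≤ (r - α) / L := div_nonneg (by linarith) hL0.le
  intro k
  induction k using Nat.strong_induction_on with
  | _ k ih =>
    intro hkK
    have step1 : opNorm (mprod Ψ a k) ≤ opNorm (Φd ^ k) +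
        ∑ j ∈ Finset.range k,
          opNorm (Φd ^ (k - 1 - j)) *
            (opNorm (Ψ (a + j) - Φd) * opNorm (mprod Ψ a j)) := by
      rw [mprod_expand Φd Ψ a k]
      simp only [opNorm_eq_clm, map_add, map_sum, _root_.map_mul, map_pow, map_sub]
      refine (norm_add_le _ _).trans (add_le_add le_rfl ?_)
      refine (norm_sum_le _ _).trans (Finset.sum_le_sum fun j hj => ?_)
      refine (norm_mul_le _ _).trans ?_
      refine mul_le_mul_of_nonneg_left (norm_mul_le _ _) ?_
      exact norm_nonneg _
    have step2 : opNorm (Φd ^ k) +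
        ∑ j ∈ Finset.range k,
          opNorm (Φd ^ (k - 1 - j)) *
            (opNorm (Ψ (a + j) - Φd) * opNorm (mprod Ψ a j)) ≤
        L * α ^ k +
        ∑ j ∈ Finset.range k,
          L * α ^ (k - 1 - j) * (((r - α) / L) * (L * r ^ j)) := by
      refine add_le_add (hstable k) (Finset.sum_le_sum fun j hj => ?_)
      rw [Finset.mem_range] at hj
      have h1 := hstable (k - 1 - j)
      have h2 := hclose j (lt_of_lt_of_le hj hkK)
      have h3 := ih j hj (le_trans (le_of_lt hj) hkK)
      refine mul_le_mul h1 ?_ (mul_nonneg (opNorm_nonneg _) (opNorm_nonneg _))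
        (by positivity)
      exact mul_le_mul h2 h3 (opNorm_nonneg _) hΔ0
    have step3 : L * α ^ k +
        ∑ j ∈ Finset.range k,
          L * α ^ (k - 1 - j) * (((r - α) / L) * (L * r ^ j)) = L * r ^ k := by
      have hcongr : ∀ j ∈ Finset.range k,
          L * α ^ (k - 1 - j) * (((r - α) / L) * (L * r ^ j)) =
          L * (r ^ 2) ^ (k - 1 - j) * ((r - r ^ 2) * r ^ j) := by
        intro j hj
        rw [← hαr]
        field_simp
      rw [Finset.sum_congr rfl hcongr, hαr, arith_sum]
    calc opNorm (mprod Ψ a k) ≤ _ := step1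
      _ ≤ _ := step2
      _ = L * r ^ k := step3

end Aux

/-- Proposition `just`, part (a).  Let `L ≥ 1`, `α ∈ (0,1)` and
`Δ = (√α − α)/L`.  If `Φ` is `(L,α)`-stable (`‖Φ^t‖ ≤ Lα^t` for all `t ≥ 0`) and the
random matrices `Φ_t(ξ_{0:t})` (adapted, i.e. functions of `ξ_{0:t}`) satisfy
`‖Φ − Φ_t(ξ_{0:t})‖ ≤ Δ` almost surely for `t ∈ {1,…,T}`, then `{Φ_t(ξ_{0:t})}` is
`(L, √α)`-stable: for all `0 ≤ t' < t'' ≤ T`,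
`‖Φ_{t''}(ξ_{0:t''}) ⋯ Φ_{t'+1}(ξ_{0:t'+1})‖ ≤ L α^{(t''−t')/2}` almost surely. -/
theorem stochastic_stability_of_perturbed_stable
    {T n : ℕ} {Ξ : Type} (proc : FiniteProcess Ξ)
    (L α : ℝ) (hL : 1 ≤ L) (hα0 : 0 < α) (hα1 : α < 1)
    (Φdet : Matrix (Fin n) (Fin n) ℝ)
    (Φ : ℕ → proc.S → Matrix (Fin n) (Fin n) ℝ)
    (hadapt : ∀ t, 1 ≤ t → t ≤ T → proc.Adapted t (Φ t))
    (hstable : ∀ t : ℕ, opNorm (Φdet ^ t) ≤ L * α ^ t)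
    (hclose : ∀ (s : proc.S) (t : ℕ), 1 ≤ t → t ≤ T →
      opNorm (Φdet - Φ t s) ≤ (Real.sqrt α - α) / L) :
    ∀ (s : proc.S) (t' k : ℕ), 1 ≤ k → t' + k ≤ T →
      opNorm (mprod (fun t => Φ t s) (t' + 1) k) ≤ L * Real.sqrt (α ^ k) := by
  
  intro s t' k hk hkT
  have hsq : Real.sqrt (α ^ k) = Real.sqrt α ^ k := by
    have h : α ^ k = (Real.sqrt α ^ k) ^ 2 := by
      rw [← pow_mul, mul_comm, pow_mul, Real.sq_sqrt hα0.le]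
    rw [h, Real.sqrt_sq (pow_nonneg (Real.sqrt_nonneg α) k)]
  rw [hsq]
  refine key_bound L α hL hα0 hα1 Φdet (fun t => Φ t s) hstable (t' + 1) k
    (fun j hj => ?_) k le_rfl
  rw [opNorm_sub_rev]
  exact hclose s (t' + 1 + j) (by omega) (by omega)
end

section
/- Let G = (V,E) be a stage-T scenario tree with nodal probabilities π satisfying π_0 = 1, π_i > 0, and Σ_{j∈children(i)} π_j = π_i, and let π_{i|j} = π_i/π_j. Given node matrices {Φ̲_i} over the nodes at stages 1 through T, define the block matrix Φ̃ = {Φ̃_{ij}} by Φ̃_{ij} = (π_{i|j})^{1/2} Φ̲_i if i is a child of j and Φ̃_{ij} = 0 otherwise. If ‖Φ̲_i‖ ≤ L for all i at stages 1 through T, then ‖Φ̃‖ ≤ L. -/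
open Matrix BigOperators

/-- A stage-`T` scenario tree: a finite rooted tree, encoded by the parent map, in which
every leaf is at distance `T` from the root (every node at stage `< T` has a child). -/
structure ScenarioTree (T : ℕ) where
  V : Type
  [finV : Fintype V]
  [deqV : DecidableEq V]
  root : V
  parent : V → V
  stage : V → ℕ
  stage_root : stage root = 0
  parent_root : parent root = root
  stage_parent : ∀ i, i ≠ root → stage (parent i) + 1 = stage i
  root_unique : ∀ i, stage i = 0 → i = root
  stage_le : ∀ i, stage i ≤ T
  extend : ∀ i, stage i < T → ∃ j, parent j = i ∧ stage j = stage i + 1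

attribute [instance] ScenarioTree.finV ScenarioTree.deqV

namespace ScenarioTree

variable {T : ℕ} (G : ScenarioTree T)

/-- The ancestor of `j` at stage `t` (for `t ≤ stage j`). -/
def anc (j : G.V) (t : ℕ) : G.V := G.parent^[G.stage j - t] j

/-- `j` is a descendant of `k` (every node is a descendant of itself). -/
def Desc (k j : G.V) : Prop := G.stage k ≤ G.stage j ∧ G.anc j (G.stage k) = k

/-- The set of children of a node. -/
def children (i : G.V) : Finset G.V :=
  Finset.univ.filter fun j => G.parent j = i ∧ j ≠ G.root

open Classical in
/-- The stage-`t` nodes. -/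
noncomputable def stageNodes (t : ℕ) : Finset G.V :=
  Finset.univ.filter fun i => G.stage i = t

open Classical in
/-- The descendants of `k` within the prediction window of length `W`
(stages `t(k),…,t(k)+W`). -/
noncomputable def subNodes (k : G.V) (W : ℕ) : Finset G.V :=
  Finset.univ.filter fun i => G.Desc k i ∧ G.stage i ≤ G.stage k + W

/-- Ordered product of the nodal matrices along the path ending at `j`, with `c` factors:
`Φ̲_j * Φ̲_{a(j)} * ⋯` (so `pathProd G Φn j (t(j) − t(i))` is `∏ Φ̲_{i⇀j}`). -/
def pathProd {n : ℕ} (Φn : G.V → Matrix (Fin n) (Fin n) ℝ) (j : G.V) :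
    ℕ → Matrix (Fin n) (Fin n) ℝ
  | 0 => 1
  | c + 1 => pathProd Φn j c * Φn (G.parent^[c] j)

/-- Tree `(L,α)`-stability of a family of nodal matrices: the ordered product along the
path from any node `i` (exclusive) to any descendant `j` has norm `≤ L α^{t(j)−t(i)}`. -/
def TreeStable {n : ℕ} (Φn : G.V → Matrix (Fin n) (Fin n) ℝ) (L α : ℝ) : Prop :=
  ∀ i j : G.V, G.Desc i j →
    opNorm (G.pathProd Φn j (G.stage j - G.stage i)) ≤ L * α ^ (G.stage j - G.stage i)

end ScenarioTree

/-- The event that the history `ξ_{0:t(j)}` equals the nodal realizations along the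
root-to-`j` path. -/
def NodeEvent {Ξ : Type} {T : ℕ} (proc : FiniteProcess Ξ) (G : ScenarioTree T)
    (ξn : G.V → Ξ) (j : G.V) (s : proc.S) : Prop :=
  ∀ t ≤ G.stage j, proc.ξ t s = ξn (G.anc j t)

open Classical in
/-- Conditional expectation of `f` given the node event of `k`. -/
noncomputable def nodeCexp {Ξ : Type} {T : ℕ} (proc : FiniteProcess Ξ) (G : ScenarioTree T)
    (ξn : G.V → Ξ) (k : G.V) (f : proc.S → ℝ) : ℝ :=
  (∑ s, if NodeEvent proc G ξn k s then proc.P s * f s else 0) /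
    (∑ s, if NodeEvent proc G ξn k s then proc.P s else 0)

/-- The scenario tree `(G, ξ̲, π)` represents the finite-support process `ξ` conditioned
on `ξ₀ = ξ₀(sb)`:
(a) a sequence is a support prefix iff it is the nodal-realization sequence of a
root-to-node path (with the stage-`τ` ancestor realizing the first `τ+1` entries);
(b) `π` is a unit mass at the root flowing down the tree with positive values;
(c) `P[ξ_{0:t(j)} = ξ̲_{0→j} ∣ ξ_{0:t(k)} = ξ̲_{0→k}] = π_j/π_k` for ancestors `k` of `j`. -/
def Represents {Ξ : Type} {T : ℕ} (proc : FiniteProcess Ξ) (sb : proc.S)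
    (G : ScenarioTree T) (ξn : G.V → Ξ) (πn : G.V → ℝ) : Prop :=
  (∀ (ζ : ℕ → Ξ) (τ t : ℕ), τ ≤ t → t ≤ T →
    ((∃ s : proc.S, proc.ξ 0 s = proc.ξ 0 sb ∧ ∀ v ≤ t, proc.ξ v s = ζ v) ↔
      ∃ k j : G.V, G.stage k = τ ∧ G.stage j = t ∧ G.Desc k j ∧
        (∀ v ≤ τ, ξn (G.anc k v) = ζ v) ∧ (∀ v ≤ t, ξn (G.anc j v) = ζ v))) ∧
  (πn G.root = 1 ∧ (∀ i, 0 < πn i) ∧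
    ∀ i : G.V, G.stage i < T → ∑ j ∈ G.children i, πn j = πn i) ∧
  (∀ k j : G.V, G.Desc k j →
    proc.prob (fun s => NodeEvent proc G ξn j s) =
      πn j / πn k * proc.prob (fun s => NodeEvent proc G ξn k s))

/-- The probability-scaled block-subdiagonal matrix `Φ̃` built from nodal matrices:
`Φ̃_{ij} = (π_i/π_j)^{1/2} Φ̲_i` if `i` is a child of `j`, and `0` otherwise,
flattened to a matrix indexed by `V × Fin n`. -/
noncomputable def scaledShift {T n : ℕ} (G : ScenarioTree T) (πn : G.V → ℝ)
    (Φn : G.V → Matrix (Fin n) (Fin n) ℝ) :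
    Matrix (G.V × Fin n) (G.V × Fin n) ℝ :=
  fun p q =>
    if G.parent p.1 = q.1 ∧ p.1 ≠ G.root then
      Real.sqrt (πn p.1 / πn q.1) * Φn p.1 p.2 q.2
    else 0

lemma sqnorm_nonneg {m : Type*} [Fintype m] (v : m → ℝ) : 0 ≤ sqnorm v :=
  Finset.sum_nonneg fun i _ => sq_nonneg _

lemma euclid_norm_eq {m : Type*} [Fintype m] (x : EuclideanSpace ℝ m) :
    ‖x‖ = Real.sqrt (sqnorm fun i => x i) := by
  rw [EuclideanSpace.norm_eq]
  congr 1
  simp [sqnorm, Real.norm_eq_abs, sq_abs]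

lemma opNorm_le_iff_sq {m' n' : Type*} [Fintype m'] [Fintype n'] [DecidableEq n']
    (A : Matrix m' n' ℝ) (L : ℝ) (hL : 0 ≤ L) :
    opNorm A ≤ L ↔ ∀ v : n' → ℝ, sqnorm (A.mulVec v) ≤ L ^ 2 * sqnorm v := by
  constructor
  · intro h v
    set x : EuclideanSpace ℝ n' := (WithLp.equiv 2 (n' → ℝ)).symm v with hx
    have h1 : ‖(LinearMap.toContinuousLinearMap (Matrix.toEuclideanLin A)) x‖ ≤ L * ‖x‖ :=
      le_trans ((LinearMap.toContinuousLinearMap (Matrix.toEuclideanLin A)).le_opNorm x)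
        (by exact mul_le_mul_of_nonneg_right h (norm_nonneg x))
    have h2 : (LinearMap.toContinuousLinearMap (Matrix.toEuclideanLin A)) x =
        (WithLp.equiv 2 (m' → ℝ)).symm (A.mulVec v) := rfl
    rw [h2, euclid_norm_eq, euclid_norm_eq] at h1
    have h3 : (fun i => ((WithLp.equiv 2 (m' → ℝ)).symm (A.mulVec v)) i) = A.mulVec v := rfl
    have h4 : (fun i => x i) = v := rfl
    rw [h3, h4] at h1
    calc sqnorm (A.mulVec v) = Real.sqrt (sqnorm (A.mulVec v)) ^ 2 :=
          (Real.sq_sqrt (sqnorm_nonneg _)).symm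
      _ ≤ (L * Real.sqrt (sqnorm v)) ^ 2 := by
          apply pow_le_pow_left₀ (Real.sqrt_nonneg _) h1
      _ = L ^ 2 * sqnorm v := by
          rw [mul_pow, Real.sq_sqrt (sqnorm_nonneg _)]
  · intro h
    apply ContinuousLinearMap.opNorm_le_bound _ hL
    intro x
    have h2 : (LinearMap.toContinuousLinearMap (Matrix.toEuclideanLin A)) x =
        (WithLp.equiv 2 (m' → ℝ)).symm (A.mulVec (WithLp.equiv 2 (n' → ℝ) x)) := rfl
    rw [h2, euclid_norm_eq, euclid_norm_eq]
    have h3 : (fun i => ((WithLp.equiv 2 (m' → ℝ)).symm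
        (A.mulVec (WithLp.equiv 2 (n' → ℝ) x))) i) = A.mulVec (fun i => x i) := rfl
    rw [h3]
    calc Real.sqrt (sqnorm (A.mulVec fun i => x i))
        ≤ Real.sqrt (L ^ 2 * sqnorm fun i => x i) := Real.sqrt_le_sqrt (h _)
      _ = L * Real.sqrt (sqnorm fun i => x i) := by
          rw [Real.sqrt_mul (sq_nonneg L), Real.sqrt_sq hL]

/-- Lemma `basic`, part (a).  On a stage-`T` scenario tree with nodal
probabilities `π` (`π₀ = 1`, `π > 0`, children masses sum to the parent's), if all nodal
matrices `Φ̲_i` at stages `1,…,T` (the non-root nodes) satisfy `‖Φ̲_i‖ ≤ L`, then the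
probability-scaled block matrix `Φ̃` satisfies `‖Φ̃‖ ≤ L`. -/
theorem scaled_shift_norm_bound
    {T n : ℕ} (G : ScenarioTree T) (πn : G.V → ℝ)
    (hroot : πn G.root = 1) (hpos : ∀ i, 0 < πn i)
    (hsum : ∀ i : G.V, G.stage i < T → ∑ j ∈ G.children i, πn j = πn i)
    (Φn : G.V → Matrix (Fin n) (Fin n) ℝ) (L : ℝ) (hL : 0 ≤ L)
    (hbdd : ∀ i : G.V, i ≠ G.root → opNorm (Φn i) ≤ L) :
    opNorm (scaledShift G πn Φn) ≤ L := by
  classical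
  rw [opNorm_le_iff_sq _ _ hL]
  intro v
  -- the block of `v` at node `j`
  set y : G.V → Fin n → ℝ := fun j s => v (j, s) with hy
  -- compute the matrix-vector product blockwise
  have hmv : ∀ i : G.V, ∀ r : Fin n,
      (scaledShift G πn Φn).mulVec v (i, r) =
        if i ≠ G.root then
          Real.sqrt (πn i / πn (G.parent i)) * ((Φn i).mulVec (y (G.parent i))) r
        else 0 := by
    intro i r
    by_cases hi : i = G.root
    · simp only [hi, ne_eq, not_true_eq_false, if_false]
      rw [Matrix.mulVec]
      apply Finset.sum_eq_zero
      intro q _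
      simp [scaledShift, dotProduct]
    · simp only [ne_eq, hi, not_false_eq_true, if_true]
      rw [Matrix.mulVec]
      have : ∀ q : G.V × Fin n, scaledShift G πn Φn (i, r) q * v q =
          if q.1 = G.parent i then
            Real.sqrt (πn i / πn (G.parent i)) * (Φn i r q.2 * v (G.parent i, q.2))
          else 0 := by
        rintro ⟨b, s⟩
        simp only [scaledShift]
        by_cases hq : b = G.parent i
        · subst hq
          rw [if_pos (⟨rfl, hi⟩ : G.parent i = G.parent i ∧ i ≠ G.root), if_pos rfl]
          ring
        · rw [if_neg (fun h => hq h.1.symm), if_neg hq, zero_mul]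
      rw [dotProduct]
      simp only [this]
      rw [Fintype.sum_prod_type, Finset.sum_eq_single (G.parent i)]
      · rw [Matrix.mulVec, dotProduct, Finset.mul_sum]
        apply Finset.sum_congr rfl
        intro s _
        rw [if_pos rfl]
      · intro b _ hb
        apply Finset.sum_eq_zero
        intro s _
        rw [if_neg hb]
      · intro h; exact absurd (Finset.mem_univ _) h
  -- squared norm of the product, blockwise
  have key : sqnorm ((scaledShift G πn Φn).mulVec v) =
      ∑ i ∈ Finset.univ.filter (· ≠ G.root),
        (πn i / πn (G.parent i)) * sqnorm ((Φn i).mulVec (y (G.parent i))) := by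
    rw [sqnorm, Fintype.sum_prod_type]
    rw [← Finset.sum_filter_add_sum_filter_not Finset.univ (· ≠ G.root)]
    have hz : ∑ i ∈ Finset.univ.filter (fun i => ¬ i ≠ G.root),
        ∑ r : Fin n, ((scaledShift G πn Φn).mulVec v (i, r)) ^ 2 = 0 := by
      apply Finset.sum_eq_zero
      intro i hi
      simp only [Finset.mem_filter, not_not] at hi
      apply Finset.sum_eq_zero
      intro r _
      rw [hmv i r, if_neg (by simp [hi.2])]
      ring
    rw [hz, add_zero]
    apply Finset.sum_congr rfl
    intro i hi
    simp only [Finset.mem_filter] at hi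
    rw [sqnorm, Finset.mul_sum]
    apply Finset.sum_congr rfl
    intro r _
    rw [hmv i r, if_pos hi.2, mul_pow,
      Real.sq_sqrt (div_nonneg (hpos i).le (hpos (G.parent i)).le)]
  rw [key]
  -- bound each block using the nodal norm bound
  have step1 : ∑ i ∈ Finset.univ.filter (· ≠ G.root),
        (πn i / πn (G.parent i)) * sqnorm ((Φn i).mulVec (y (G.parent i))) ≤
      ∑ i ∈ Finset.univ.filter (· ≠ G.root),
        (πn i / πn (G.parent i)) * (L ^ 2 * sqnorm (y (G.parent i))) := by
    apply Finset.sum_le_sum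
    intro i hi
    simp only [Finset.mem_filter] at hi
    apply mul_le_mul_of_nonneg_left _ (div_nonneg (hpos i).le (hpos (G.parent i)).le)
    exact (opNorm_le_iff_sq _ _ hL).1 (hbdd i hi.2) _
  refine le_trans step1 ?_
  -- regroup the sum by parent node
  have regroup : ∑ i ∈ Finset.univ.filter (· ≠ G.root),
        (πn i / πn (G.parent i)) * (L ^ 2 * sqnorm (y (G.parent i))) =
      ∑ j : G.V, ∑ i ∈ G.children j, (πn i / πn j) * (L ^ 2 * sqnorm (y j)) := by
    rw [← Finset.sum_fiberwise_of_maps_to (g := G.parent)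
      (t := (Finset.univ : Finset G.V)) (fun i _ => Finset.mem_univ _)]
    apply Finset.sum_congr rfl
    intro j _
    apply Finset.sum_congr
    · ext i
      simp only [ScenarioTree.children, Finset.mem_filter, Finset.mem_univ, true_and, ne_eq]
      tauto
    · intro i hi
      simp only [ScenarioTree.children, Finset.mem_filter, Finset.mem_univ, true_and] at hi
      rw [hi.1]
  rw [regroup]
  -- children probabilities sum to at most the parent's
  have hchild : ∀ j : G.V, ∑ i ∈ G.children j, πn i ≤ πn j := by
    intro j
    rcases lt_or_eq_of_le (G.stage_le j) with hj | hj
    · exact (hsum j hj).le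
    · have : G.children j = ∅ := by
        rw [Finset.eq_empty_iff_forall_notMem]
        intro i hi
        simp only [ScenarioTree.children, Finset.mem_filter, Finset.mem_univ, true_and] at hi
        have := G.stage_parent i hi.2
        rw [hi.1, hj] at this
        exact absurd (G.stage_le i) (by omega)
      rw [this, Finset.sum_empty]
      exact (hpos j).le
  have step2 : ∑ j : G.V, ∑ i ∈ G.children j, (πn i / πn j) * (L ^ 2 * sqnorm (y j)) ≤
      ∑ j : G.V, L ^ 2 * sqnorm (y j) := by
    apply Finset.sum_le_sum
    intro j _
    have : ∑ i ∈ G.children j, (πn i / πn j) * (L ^ 2 * sqnorm (y j)) =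
        ((∑ i ∈ G.children j, πn i) / πn j) * (L ^ 2 * sqnorm (y j)) := by
      rw [Finset.sum_div, Finset.sum_mul]
    rw [this]
    calc ((∑ i ∈ G.children j, πn i) / πn j) * (L ^ 2 * sqnorm (y j))
        ≤ 1 * (L ^ 2 * sqnorm (y j)) := by
          apply mul_le_mul_of_nonneg_right _
            (mul_nonneg (sq_nonneg L) (sqnorm_nonneg _))
          rw [div_le_one (hpos j)]
          exact hchild j
      _ = L ^ 2 * sqnorm (y j) := one_mul _
  refine le_trans step2 ?_
  apply le_of_eq
  rw [sqnorm, Fintype.sum_prod_type, Finset.mul_sum]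
  apply Finset.sum_congr rfl
  intro j _
  simp [sqnorm, hy]
end
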